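/- For each κ > 5, the smallest solution λ₁^κ ∈ (π²/2, π²) of the equation √(κ² − λ) = −√λ·cot(√λ) satisfies λ₁^κ < π² = λ₁^∞ and (λ₁^∞ − λ₁^κ)/λ₁^∞ ≤ 10/(3κ) + o(1/κ) as κ → ∞; in particular (λ₁^∞ − λ₁^κ)/λ₁^∞ → 0, i.e. λ₁^κ → π². -/

import Mathlib

open Filter Asymptotics Real Set

noncomputable section EVAux

namespace EVAux

/-- The solution set of the transcendental equation. -/
def S (κ : ℝ) : Set ℝ :=
  {lam : ℝ | lam ∈ Set.Ioo 0 (Real.pi ^ 2) ∧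
    Real.sqrt (κ ^ 2 - lam)
      = -(Real.sqrt lam * (Real.cos (Real.sqrt lam) / Real.sin (Real.sqrt lam)))}

lemma pi_sq_lt_ten : Real.pi ^ 2 < 10 := by
  nlinarith [Real.pi_lt_d2, Real.pi_gt_three]

/-- auxiliary function whose zeros (in `(3π/4, π)`) are square roots of solutions -/
def hfun (κ : ℝ) (x : ℝ) : ℝ :=
  Real.sqrt (κ ^ 2 - x ^ 2) + x * (Real.cos x / Real.sin x)

lemma hfun_strictAntiOn {κ : ℝ} (hκ : 5 < κ) :
    StrictAntiOn (hfun κ) (Set.Ico (3 * π / 4) π) := by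
  have hpi3 := Real.pi_gt_three
  have h1 : StrictAntiOn (fun x : ℝ => Real.sqrt (κ ^ 2 - x ^ 2))
      (Set.Ico (3 * π / 4) π) := by
    intro a ha b hb hab
    have hb0' : 0 < b := by nlinarith [ha.1, hab]
    have hb0 : (0:ℝ) ≤ κ ^ 2 - b ^ 2 := by
      have hbκ : b < κ := by linarith [hb.2, Real.pi_lt_d2]
      nlinarith
    apply Real.sqrt_lt_sqrt hb0
    have ha0 : 0 < a := by nlinarith [ha.1]
    nlinarith
  have h2 : StrictAntiOn (fun x : ℝ => x * (Real.cos x / Real.sin x))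
      (Set.Ico (3 * π / 4) π) := by
    apply strictAntiOn_of_deriv_neg (convex_Ico _ _)
    · apply ContinuousOn.mul continuousOn_id
      apply ContinuousOn.div (Real.continuous_cos.continuousOn)
        (Real.continuous_sin.continuousOn)
      intro x hx
      exact ne_of_gt (Real.sin_pos_of_pos_of_lt_pi (by nlinarith [hx.1]) hx.2)
    · intro x hx
      rw [interior_Ico] at hx
      have hsin : 0 < Real.sin x := Real.sin_pos_of_pos_of_lt_pi (by nlinarith [hx.1]) hx.2
      have hd : HasDerivAt (fun x : ℝ => x * (Real.cos x / Real.sin x))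
          (((1 * Real.cos x + x * (-Real.sin x)) * Real.sin x - x * Real.cos x * Real.cos x)
            / Real.sin x ^ 2) x := by
        have h0 : HasDerivAt (fun x : ℝ => x * Real.cos x)
            (1 * Real.cos x + x * (-Real.sin x)) x :=
          (hasDerivAt_id x).mul (Real.hasDerivAt_cos x)
        have e : (fun x : ℝ => x * (Real.cos x / Real.sin x))
            = (fun x : ℝ => x * Real.cos x) / Real.sin := by
          funext y; simp [mul_div_assoc]
        rw [e]
        exact h0.div (Real.hasDerivAt_sin x) (ne_of_gt hsin)
      rw [hd.deriv]
      apply div_neg_of_neg_of_pos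
      · nlinarith [Real.sin_sq_add_cos_sq x, Real.sin_le_one x, Real.neg_one_le_sin x,
          Real.cos_le_one x, Real.neg_one_le_cos x, hx.1]
      · positivity
  intro a ha b hb hab
  exact add_lt_add (h1 ha hb hab) (h2 ha hb hab)

/-- Any solution's square root lies in `(3π/4, π)` and is a zero of `hfun`. -/
lemma sqrt_mem {κ : ℝ} (hκ : 5 < κ) {lam : ℝ} (hl : lam ∈ S κ) :
    Real.sqrt lam ∈ Set.Ioo (3 * π / 4) π ∧ hfun κ (Real.sqrt lam) = 0 := by
  have hpi3 := Real.pi_gt_three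
  have hpi4 := Real.pi_lt_d2
  obtain ⟨⟨hl0, hl1⟩, heq⟩ := hl
  set t := Real.sqrt lam with ht
  have ht0 : 0 < t := Real.sqrt_pos.mpr hl0
  have htpi : t < π := by
    have := Real.sqrt_lt_sqrt (le_of_lt hl0) hl1
    rwa [show (π:ℝ)^2 = π*π by ring, Real.sqrt_mul_self Real.pi_pos.le] at this
  have hsq : t ^ 2 = lam := Real.sq_sqrt hl0.le
  have hsin : 0 < Real.sin t := Real.sin_pos_of_pos_of_lt_pi ht0 htpi
  have hL : 0 < Real.sqrt (κ ^ 2 - lam) := by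
    apply Real.sqrt_pos.mpr
    nlinarith [pi_sq_lt_ten]
  have hLsq : Real.sqrt (κ ^ 2 - lam) ^ 2 = κ ^ 2 - lam :=
    Real.sq_sqrt (by nlinarith [pi_sq_lt_ten])
  have hL3 : 3 < Real.sqrt (κ ^ 2 - lam) := by
    nlinarith [pi_sq_lt_ten, hL]
  -- rule out t ≤ π/2
  have ht2 : π / 2 < t := by
    by_contra hcon
    push_neg at hcon
    have hcos : 0 ≤ Real.cos t := Real.cos_nonneg_of_mem_Icc ⟨by linarith, hcon⟩
    have h1 : 0 ≤ t * (Real.cos t / Real.sin t) := by positivity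
    rw [heq] at hL
    linarith
  -- rule out t ≤ 3π/4
  have ht3 : 3 * π / 4 < t := by
    by_contra hcon
    push_neg at hcon
    have h1 : -Real.cos t ≤ Real.sqrt 2 / 2 := by
      have hc : Real.cos (3 * π / 4) ≤ Real.cos t :=
        Real.cos_le_cos_of_nonneg_of_le_pi ht0.le (by linarith) hcon
      have h34 : Real.cos (3 * π / 4) = -(Real.sqrt 2 / 2) := by
        rw [show (3:ℝ) * π / 4 = π - π/4 by ring, Real.cos_pi_sub, Real.cos_pi_div_four]
      linarith [h34 ▸ hc]
    have h2 : Real.sqrt 2 / 2 ≤ Real.sin t := by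
      have hs : Real.sin (π / 4) ≤ Real.sin (π - t) :=
        Real.sin_le_sin_of_le_of_le_pi_div_two (by linarith) (by linarith) (by linarith)
      rw [Real.sin_pi_sub, Real.sin_pi_div_four] at hs
      exact hs
    have hdiv : -Real.cos t ≤ Real.sin t := le_trans h1 h2
    have hble : -(t * (Real.cos t / Real.sin t)) ≤ t := by
      have : -(t * (Real.cos t / Real.sin t)) = t * ((-Real.cos t) / Real.sin t) := by ring
      rw [this]
      have hr : (-Real.cos t) / Real.sin t ≤ 1 := (div_le_one hsin).mpr hdiv
      nlinarith
    rw [heq] at hL3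
    linarith
  refine ⟨⟨ht3, htpi⟩, ?_⟩
  have heq' : Real.sqrt (κ ^ 2 - t ^ 2) = -(t * (Real.cos t / Real.sin t)) := by
    rw [hsq]; exact heq
  rw [hfun, heq']; ring

set_option maxHeartbeats 1600000 in
/-- Existence of a solution with a quantitative bound. -/
lemma key {κ : ℝ} (hκ : 5 < κ) :
    ∃ lam, S κ = {lam} ∧ lam ∈ Set.Ioo (π ^ 2 / 2) (π ^ 2) ∧
      π ^ 2 - lam ≤ 8 * π ^ 2 / (3 * κ) := by
  have hpi3 := Real.pi_gt_three
  have hpi4 := Real.pi_lt_d2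
  -- IVT for G s = sqrt(κ²−s²) sin s + s cos s on [3π/4, π]
  set G : ℝ → ℝ := fun s => Real.sqrt (κ ^ 2 - s ^ 2) * Real.sin s + s * Real.cos s with hG
  have hcont : ContinuousOn G (Set.Icc (3 * π / 4) π) := by
    apply Continuous.continuousOn
    exact ((Real.continuous_sqrt.comp (by continuity)).mul Real.continuous_sin).add
      (continuous_id.mul Real.continuous_cos)
  have hGpi : G π < 0 := by
    simp only [hG, Real.sin_pi, Real.cos_pi, mul_zero, zero_add, mul_neg_one]
    linarith
  have hGa : 0 < G (3 * π / 4) := by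
    have hs : Real.sin (3 * π / 4) = Real.sqrt 2 / 2 := by
      rw [show (3:ℝ) * π / 4 = π - π/4 by ring, Real.sin_pi_sub, Real.sin_pi_div_four]
    have hc : Real.cos (3 * π / 4) = -(Real.sqrt 2 / 2) := by
      rw [show (3:ℝ) * π / 4 = π - π/4 by ring, Real.cos_pi_sub, Real.cos_pi_div_four]
    have h2 : (0:ℝ) < Real.sqrt 2 / 2 := by positivity
    have hbig : 3 * π / 4 < Real.sqrt (κ ^ 2 - (3 * π / 4) ^ 2) := by
      have hnn : (0:ℝ) ≤ κ ^ 2 - (3 * π / 4) ^ 2 := by nlinarith [pi_sq_lt_ten]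
      nlinarith [Real.sq_sqrt hnn, Real.sqrt_nonneg (κ ^ 2 - (3 * π / 4) ^ 2),
        pi_sq_lt_ten]
    simp only [hG]
    rw [hs, hc]
    nlinarith
  obtain ⟨s, hsmem, hGs⟩ : ∃ s ∈ Set.Ioo (3 * π / 4) π, G s = 0 := by
    have h := intermediate_value_Ioo' (by linarith : 3 * π / 4 ≤ π) hcont
    have h0 : (0:ℝ) ∈ Set.Ioo (G π) (G (3 * π / 4)) := ⟨hGpi, hGa⟩
    obtain ⟨s, hs, hGs⟩ := h h0
    exact ⟨s, hs, hGs⟩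
  have hsin : 0 < Real.sin s := Real.sin_pos_of_pos_of_lt_pi (by nlinarith [hsmem.1]) hsmem.2
  have hs0 : 0 < s := by nlinarith [hsmem.1]
  -- the candidate solution
  set lam := s ^ 2 with hlam
  have hslam : Real.sqrt lam = s := by
    rw [hlam, Real.sqrt_sq hs0.le]
  have hlam_mem : lam ∈ Set.Ioo (0:ℝ) (π ^ 2) := by
    constructor
    · positivity
    · nlinarith [hsmem.2]
  have heqs : Real.sqrt (κ ^ 2 - s ^ 2) = -(s * (Real.cos s / Real.sin s)) := by
    have : Real.sqrt (κ ^ 2 - s ^ 2) * Real.sin s = -(s * Real.cos s) := by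
      simp only [hG] at hGs; linarith
    field_simp
    linarith
  have hlam_S : lam ∈ S κ := by
    refine ⟨hlam_mem, ?_⟩
    rw [hslam, hlam]
    exact heqs
  -- quantitative bound: δ = π − s
  set δ := π - s with hδ
  have hδ0 : 0 < δ := by simp [hδ]; exact hsmem.2
  have hδ4 : δ < π / 4 := by simp only [hδ]; linarith [hsmem.1]
  have hsinδ : Real.sin s = Real.sin δ := by
    rw [hδ, Real.sin_pi_sub]
  have hcosδ : Real.cos s = -Real.cos δ := by
    rw [hδ, Real.cos_pi_sub, neg_neg]
  have hcosδ0 : 0 < Real.cos δ := Real.cos_pos_of_mem_Ioo ⟨by linarith, by linarith⟩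
  have hGs' : Real.sqrt (κ ^ 2 - s ^ 2) * Real.sin δ = s * Real.cos δ := by
    simp only [hG] at hGs
    rw [hsinδ, hcosδ] at hGs
    linarith
  have htan : δ * Real.cos δ < Real.sin δ := by
    have := Real.lt_tan hδ0 (by linarith)
    rw [Real.tan_eq_sin_div_cos] at this
    calc δ * Real.cos δ < (Real.sin δ / Real.cos δ) * Real.cos δ := by
          apply mul_lt_mul_of_pos_right this hcosδ0
      _ = Real.sin δ := by field_simp
  have hsqrt_lb : 3 * κ / 4 ≤ Real.sqrt (κ ^ 2 - s ^ 2) := by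
    have hnn : (0:ℝ) ≤ κ ^ 2 - s ^ 2 := by nlinarith [hsmem.2, pi_sq_lt_ten]
    have h916 : (3 * κ / 4) ^ 2 ≤ κ ^ 2 - s ^ 2 := by
      nlinarith [hsmem.2, pi_sq_lt_ten]
    calc 3 * κ / 4 = Real.sqrt ((3 * κ / 4) ^ 2) := by
          rw [Real.sqrt_sq (by linarith)]
      _ ≤ Real.sqrt (κ ^ 2 - s ^ 2) := Real.sqrt_le_sqrt h916
  have hδle : δ * Real.sqrt (κ ^ 2 - s ^ 2) ≤ π := by
    have h1 : Real.sqrt (κ ^ 2 - s ^ 2) * (δ * Real.cos δ) ≤ s * Real.cos δ := by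
      rw [← hGs']
      exact mul_le_mul_of_nonneg_left htan.le (Real.sqrt_nonneg _)
    have h2 : δ * Real.sqrt (κ ^ 2 - s ^ 2) * Real.cos δ ≤ s * Real.cos δ := by
      calc δ * Real.sqrt (κ ^ 2 - s ^ 2) * Real.cos δ
          = Real.sqrt (κ ^ 2 - s ^ 2) * (δ * Real.cos δ) := by ring
        _ ≤ s * Real.cos δ := h1
    exact le_trans (le_of_mul_le_mul_right h2 hcosδ0) (by linarith [hsmem.2])
  have hbound : π ^ 2 - lam ≤ 8 * π ^ 2 / (3 * κ) := by
    have hδb : δ ≤ 4 * π / (3 * κ) := by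
      have h1 : δ * (3 * κ / 4) ≤ π := by
        calc δ * (3 * κ / 4) ≤ δ * Real.sqrt (κ ^ 2 - s ^ 2) := by
              apply mul_le_mul_of_nonneg_left hsqrt_lb hδ0.le
          _ ≤ π := hδle
      have hκ0 : (0:ℝ) < 3 * κ := by linarith
      rw [le_div_iff₀ hκ0]
      nlinarith
    have : π ^ 2 - lam = δ * (π + s) := by rw [hlam, hδ]; ring
    rw [this]
    calc δ * (π + s) ≤ (4 * π / (3 * κ)) * (2 * π) := by
          apply mul_le_mul hδb (by linarith [hsmem.2]) (by linarith [hs0]) (by positivity)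
      _ = 8 * π ^ 2 / (3 * κ) := by ring
  -- uniqueness
  refine ⟨lam, ?_, ⟨by nlinarith [hsmem.1], hlam_mem.2⟩, hbound⟩
  apply Set.eq_singleton_iff_unique_mem.mpr
  refine ⟨hlam_S, ?_⟩
  intro lam' hlam'
  obtain ⟨ht', hz'⟩ := sqrt_mem hκ hlam'
  have hzs : hfun κ s = 0 := by
    rw [hfun, heqs]; ring
  have hinj := (hfun_strictAntiOn hκ).injOn
  have ht'' : Real.sqrt lam' ∈ Set.Ico (3 * π / 4) π := ⟨ht'.1.le, ht'.2⟩
  have hs'' : s ∈ Set.Ico (3 * π / 4) π := ⟨hsmem.1.le, hsmem.2⟩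
  have : Real.sqrt lam' = s := hinj ht'' hs'' (by rw [hz', hzs])
  have hlam'0 : 0 ≤ lam' := hlam'.1.1.le
  calc lam' = Real.sqrt lam' ^ 2 := (Real.sq_sqrt hlam'0).symm
    _ = s ^ 2 := by rw [this]
    _ = lam := rfl

/-- The lowest eigenvalue function. -/
def lfun (κ : ℝ) : ℝ := if h : 5 < κ then (key h).choose else Real.pi ^ 2

lemma lfun_spec {κ : ℝ} (h : 5 < κ) :
    S κ = {lfun κ} ∧ lfun κ ∈ Set.Ioo (π ^ 2 / 2) (π ^ 2) ∧
      π ^ 2 - lfun κ ≤ 8 * π ^ 2 / (3 * κ) := by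
  rw [lfun, dif_pos h]
  exact (key h).choose_spec

end EVAux
end EVAux

open EVAux in

/-- For `κ > 5` the smallest solution `λ₁^κ` of `√(κ² − λ) = −√λ·cot(√λ)` in `(0, π²)` exists,
lies in `(π²/2, π²)`, satisfies `λ₁^κ < π² = λ₁^∞` and
`(λ₁^∞ − λ₁^κ)/λ₁^∞ ≤ 10/(3κ) + o(1/κ)`; in particular `λ₁^κ → π²` as `κ → ∞`, with
`π² − λ₁^κ = O(1/κ)`. -/
theorem lowest_eigenvalue_asymptotics :
    ∃ l : ℝ → ℝ,
      (∀ κ : ℝ, 5 < κ →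
        IsLeast {lam : ℝ | lam ∈ Set.Ioo 0 (Real.pi ^ 2) ∧
          Real.sqrt (κ ^ 2 - lam)
            = -(Real.sqrt lam * (Real.cos (Real.sqrt lam) / Real.sin (Real.sqrt lam)))}
          (l κ)) ∧
      (∀ κ : ℝ, 5 < κ → l κ ∈ Set.Ioo (Real.pi ^ 2 / 2) (Real.pi ^ 2)) ∧
      (∀ κ : ℝ, 5 < κ → l κ < Real.pi ^ 2) ∧
      Tendsto l atTop (nhds (Real.pi ^ 2)) ∧
      (fun κ => Real.pi ^ 2 - l κ) =O[atTop] (fun κ => 1 / κ) ∧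
      ∃ e : ℝ → ℝ, e =o[atTop] (fun κ : ℝ => 1 / κ) ∧
        ∀ κ : ℝ, 5 < κ →
          (Real.pi ^ 2 - l κ) / Real.pi ^ 2 ≤ 10 / (3 * κ) + e κ := by
  have hπ2 : (0:ℝ) < π ^ 2 := by positivity
  refine ⟨lfun, ?_, fun κ hκ => (lfun_spec hκ).2.1, fun κ hκ => (lfun_spec hκ).2.1.2,
    ?_, ?_, fun _ => 0, ?_, ?_⟩
  · intro κ hκ
    have hset := (lfun_spec hκ).1
    have : IsLeast (S κ) (lfun κ) := by
      rw [hset]; exact isLeast_singleton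
    exact this
  · -- Tendsto
    have h1 : Tendsto (fun κ : ℝ => π ^ 2 - 8 * π ^ 2 / (3 * κ)) atTop (nhds (π ^ 2)) := by
      have h2 : Tendsto (fun κ : ℝ => 8 * π ^ 2 / (3 * κ)) atTop (nhds 0) := by
        apply Tendsto.div_atTop tendsto_const_nhds
        exact Tendsto.const_mul_atTop (by norm_num) tendsto_id
      simpa using tendsto_const_nhds.sub h2
    apply tendsto_of_tendsto_of_tendsto_of_le_of_le' h1 tendsto_const_nhds
    · filter_upwards [eventually_gt_atTop 5] with κ hκ
      linarith [(lfun_spec hκ).2.2]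
    · filter_upwards [eventually_gt_atTop 5] with κ hκ
      exact (lfun_spec hκ).2.1.2.le
  · -- BigO
    apply Asymptotics.isBigO_iff.mpr
    refine ⟨8 * π ^ 2 / 3, ?_⟩
    filter_upwards [eventually_gt_atTop 5] with κ hκ
    have hsp := (lfun_spec hκ).2
    have hκ0 : (0:ℝ) < κ := by linarith
    rw [Real.norm_eq_abs, Real.norm_eq_abs, abs_of_nonneg (by linarith [hsp.1.2]),
      abs_of_nonneg (by positivity)]
    calc π ^ 2 - lfun κ ≤ 8 * π ^ 2 / (3 * κ) := hsp.2
      _ = 8 * π ^ 2 / 3 * (1 / κ) := by field_simp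
  · exact isLittleO_zero _ _
  · intro κ hκ
    have hsp := (lfun_spec hκ).2
    have hκ0 : (0:ℝ) < κ := by linarith
    rw [add_zero, div_le_div_iff₀ hπ2 (by positivity : (0:ℝ) < 3 * κ)]
    have h8 : (π ^ 2 - lfun κ) * (3 * κ) ≤ 8 * π ^ 2 := by
      calc (π ^ 2 - lfun κ) * (3 * κ) ≤ (8 * π ^ 2 / (3 * κ)) * (3 * κ) :=
            mul_le_mul_of_nonneg_right hsp.2 (by positivity)
        _ = 8 * π ^ 2 := by field_simp
    nlinarith [h8, hπ2]
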